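/- Let A be a commutative Noetherian ring, I ⊆ A an ideal, and M a finitely generated A-module. Then for every i ≥ 0 and every n ≥ 0 there exists m ≥ n such that the homomorphism Tor_i^A(A/I, I^m M) → Tor_i^A(A/I, I^n M) induced by the inclusion I^m M ⊆ I^n M is the zero map. (Equivalently: the pro-abelian group {Tor_i^A(A/I, I^k M)}_{k≥0} is pro-isomorphic to zero.) -/

import Mathlib

open CategoryTheory

open CategoryTheory CategoryTheory.Limits
open scoped TensorProduct
set_option linter.unusedSectionVars false

noncomputable section
namespace ProZeroTor
variable {A : Type} [CommRing A]

lemma smul_quot_zero (I : Ideal A) {a : A} (ha : a ∈ I) (x : A ⧸ I) : a • x = 0 := by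
  obtain ⟨b, rfl⟩ := Ideal.Quotient.mk_surjective x
  have : a • (Ideal.Quotient.mk I b) = Ideal.Quotient.mk I (a * b) := rfl
  rw [this, Ideal.Quotient.eq_zero_iff_mem]
  exact I.mul_mem_right b ha

lemma sc_homologyMap_zero {C : Type*} [Category C] [Abelian C] {S₁ S₂ : ShortComplex C}
    (ψ : S₁ ⟶ S₂) (h : ψ.τ₂ = 0) : ShortComplex.homologyMap ψ = 0 := by
  have hc : ShortComplex.cyclesMap ψ = 0 := by
    rw [← cancel_mono S₂.iCycles, ShortComplex.cyclesMap_i, h, comp_zero, zero_comp]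
  rw [← cancel_epi S₁.homologyπ, ShortComplex.homologyπ_naturality, hc, comp_zero, zero_comp]

lemma homologyMap_zero_of_f_zero {C : Type*} [Category C] [Abelian C]
    {K L : HomologicalComplex C (ComplexShape.down ℕ)} (φ : K ⟶ L) (i : ℕ)
    (h : φ.f i = 0) : HomologicalComplex.homologyMap φ i = 0 := by
  apply sc_homologyMap_zero
  exact h

lemma whisker_zero (I : Ideal A) {P Q : ModuleCat A} (f : P ⟶ Q)
    (hf : ∀ x, f x ∈ (I • ⊤ : Submodule A Q)) :
    ((MonoidalCategory.tensoringLeft (ModuleCat A)).obj (ModuleCat.of A (A ⧸ I))).map f = 0 := by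
  have key : ∀ (x : A ⧸ I) (q : Q), q ∈ (I • ⊤ : Submodule A Q) →
      (x ⊗ₜ[A] q : (A ⧸ I) ⊗[A] Q) = 0 := by
    intro x q hq
    refine Submodule.smul_induction_on hq (fun a ha q _ => ?_) (fun p q hp hq => ?_)
    · rw [TensorProduct.tmul_smul, TensorProduct.smul_tmul', smul_quot_zero I ha,
        TensorProduct.zero_tmul]
    · rw [TensorProduct.tmul_add, hp, hq, add_zero]
  apply ModuleCat.hom_ext
  apply TensorProduct.ext'
  intro x p
  show (MonoidalCategory.whiskerLeft (ModuleCat.of A (A ⧸ I)) f) (x ⊗ₜ p) = 0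
  erw [ModuleCat.MonoidalCategory.whiskerLeft_apply]
  exact key x (f p) (hf p)


end ProZeroTor
namespace ProZeroTor
variable (A : Type) [CommRing A] [IsNoetherianRing A]
def cdim (P : Type) [AddCommGroup P] [Module A P] [Module.Finite A P] : ℕ :=
  (Module.Finite.exists_fin' A P).choose
def cmap (P : Type) [AddCommGroup P] [Module A P] [Module.Finite A P] :
    (Fin (cdim A P) → A) →ₗ[A] P :=
  (Module.Finite.exists_fin' A P).choose_spec.choose
lemma cmap_surj (P : Type) [AddCommGroup P] [Module A P] [Module.Finite A P] :
    Function.Surjective (cmap A P) :=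
  (Module.Finite.exists_fin' A P).choose_spec.choose_spec
variable (N : Type) [AddCommGroup N] [Module A N] [Module.Finite A N]
def stage : ℕ → Σ k : ℕ, Submodule A (Fin k → A) := fun j =>
  Nat.rec (⟨cdim A N, LinearMap.ker (cmap A N)⟩ : Σ k : ℕ, Submodule A (Fin k → A))
    (fun _ s => ⟨cdim A s.2, LinearMap.ker (cmap A (s.2 : Submodule A (Fin s.1 → A)))⟩) j
def dm (j : ℕ) : (Fin (stage A N (j+1)).1 → A) →ₗ[A] (Fin (stage A N j).1 → A) :=
  (stage A N j).2.subtype ∘ₗ cmap A (stage A N j).2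
lemma ker_dm (j : ℕ) : LinearMap.ker (dm A N j) = (stage A N (j+1)).2 := by
  rw [dm]; exact (LinearMap.ker_comp _ _).trans (by rw [Submodule.ker_subtype]; rfl)
lemma range_dm (j : ℕ) : LinearMap.range (dm A N j) = (stage A N j).2 := by
  rw [dm]; exact (LinearMap.range_comp _ _).trans ((congrArg _ (LinearMap.range_eq_top.2 (cmap_surj A _))).trans
    ((Submodule.map_top _).trans (Submodule.range_subtype _)))
lemma ker_cmap : LinearMap.ker (cmap A N) = (stage A N 0).2 := rfl
lemma dm_dm (j : ℕ) : (dm A N j) ∘ₗ (dm A N (j+1)) = 0 := by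
  apply LinearMap.ext; intro x
  have : dm A N (j+1) x ∈ LinearMap.ker (dm A N j) := by
    rw [ker_dm]
    exact (range_dm A N (j+1)) ▸ LinearMap.mem_range_self _ x
  simpa using this

-- the chain complex
lemma resSq (j : ℕ) :
    ModuleCat.ofHom (dm A N (j+1)) ≫ ModuleCat.ofHom (dm A N j) = 0 := by
  apply ModuleCat.hom_ext; apply LinearMap.ext; intro x
  exact LinearMap.congr_fun (dm_dm A N j) x

lemma cmap_dm_apply (x) : cmap A N (dm A N 0 x) = 0 := by
  have : dm A N 0 x ∈ LinearMap.ker (cmap A N) := by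
    rw [ker_cmap]
    exact (range_dm A N 0) ▸ LinearMap.mem_range_self _ x
  exact this

lemma dm_dm_apply (j : ℕ) (x) : dm A N j (dm A N (j+1) x) = 0 := by
  have := LinearMap.congr_fun (dm_dm A N j) x
  simpa using this

def resCx : ChainComplex (ModuleCat A) ℕ :=
  ChainComplex.of (fun j => ModuleCat.of A (Fin (stage A N j).1 → A))
    (fun j => ModuleCat.ofHom (dm A N j)) (resSq A N)

lemma resCx_d (j : ℕ) : (resCx A N).d (j+1) j = ModuleCat.ofHom (dm A N j) :=
  ChainComplex.of_d (fun j => ModuleCat.of A (Fin (stage A N j).1 → A))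
    (fun j => ModuleCat.ofHom (dm A N j)) j

instance resCx_projective (j : ℕ) : CategoryTheory.Projective ((resCx A N).X j) :=
  ModuleCat.projective_of_free (Pi.basisFun A (Fin (stage A N j).1))

def resπ : resCx A N ⟶ (ChainComplex.single₀ (ModuleCat A)).obj (ModuleCat.of A N) :=
  (ChainComplex.toSingle₀Equiv _ _).symm ⟨ModuleCat.ofHom (cmap A N), by
    rw [resCx_d]
    apply ModuleCat.hom_ext; apply LinearMap.ext; intro x
    show cmap A N (dm A N 0 x) = 0
    have : dm A N 0 x ∈ LinearMap.ker (cmap A N) := by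
      rw [ker_cmap]
      exact (range_dm A N 0) ▸ LinearMap.mem_range_self _ x
    exact this⟩

lemma resπ_f_zero : (resπ A N).f 0 = ModuleCat.ofHom (cmap A N) := by
  apply ChainComplex.toSingle₀Equiv_symm_apply_f_zero

lemma resCx_exactAt_succ (j : ℕ) : (resCx A N).ExactAt (j+1) := by
  rw [HomologicalComplex.exactAt_iff' _ (j+2) (j+1) j (by simp) (by simp)]
  rw [ShortComplex.moduleCat_exact_iff_range_eq_ker]
  have e1 : (resCx A N).d (j+2) (j+1) = ModuleCat.ofHom (dm A N (j+1)) := resCx_d A N (j+1)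
  have e2 : (resCx A N).d (j+1) j = ModuleCat.ofHom (dm A N j) := resCx_d A N j
  show LinearMap.range ((resCx A N).d (j+2) (j+1)).hom = LinearMap.ker ((resCx A N).d (j+1) j).hom
  rw [e1, e2]
  show LinearMap.range (dm A N (j+1)) = LinearMap.ker (dm A N j)
  rw [range_dm, ker_dm]

instance resπ_quasiIso : QuasiIso (resπ A N) := ⟨fun j => by
  cases j with
  | zero =>
    rw [ChainComplex.quasiIsoAt₀_iff, ShortComplex.quasiIso_iff_of_zeros']
    · have hd : ModuleCat.ofHom (dm A N 0) ≫ ModuleCat.ofHom (cmap A N) = 0 := by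
        apply ModuleCat.hom_ext; apply LinearMap.ext; intro x
        show cmap A N (dm A N 0 x) = 0
        have : dm A N 0 x ∈ LinearMap.ker (cmap A N) := by
          rw [ker_cmap]
          exact (range_dm A N 0) ▸ LinearMap.mem_range_self _ x
        exact this
      have hex : (ShortComplex.mk (ModuleCat.ofHom (dm A N 0)) (ModuleCat.ofHom (cmap A N)) hd).Exact := by
        rw [ShortComplex.moduleCat_exact_iff_range_eq_ker]
        show LinearMap.range (dm A N 0) = LinearMap.ker (cmap A N)
        rw [range_dm, ker_cmap]
      have hepi : Epi (ShortComplex.mk (ModuleCat.ofHom (dm A N 0)) (ModuleCat.ofHom (cmap A N)) hd).g := by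
        rw [ModuleCat.epi_iff_surjective]
        exact cmap_surj A N
      refine (ShortComplex.exact_and_epi_g_iff_of_iso ?_).2 ⟨hex, hepi⟩
      exact ShortComplex.isoMk (Iso.refl _) (Iso.refl _) (Iso.refl _) (by simp [resCx_d]; rfl) (by simp [resπ_f_zero]; rfl)
    · rfl
    · rfl
    · rfl
  | succ n =>
    rw [quasiIsoAt_iff_exactAt']
    · apply resCx_exactAt_succ
    · apply ChainComplex.exactAt_succ_single_obj⟩

def resolution : ProjectiveResolution (ModuleCat.of A N) where
  complex := resCx A N
  π := resπ A N

end ProZeroTor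

noncomputable section Part2
namespace ProZeroTor

variable {A : Type} [CommRing A] [IsNoetherianRing A]

lemma exists_lift {k : ℕ} {V W : Type} [AddCommGroup V] [Module A V] [AddCommGroup W] [Module A W]
    (f : (Fin k → A) →ₗ[A] V) (u : W →ₗ[A] V) (S : Submodule A W)
    (hf : ∀ x, f x ∈ S.map u) :
    ∃ g : (Fin k → A) →ₗ[A] W, (∀ x, g x ∈ S) ∧ u ∘ₗ g = f := by
  have hch : ∀ t : Fin k, ∃ w, w ∈ S ∧ u w = f (Pi.basisFun A (Fin k) t) := by
    intro t
    obtain ⟨w, hw1, hw2⟩ := Submodule.mem_map.1 (hf _)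
    exact ⟨w, hw1, hw2⟩
  choose w hwS hwu using hch
  refine ⟨(Pi.basisFun A (Fin k)).constr A w, ?_, ?_⟩
  · intro x
    rw [Module.Basis.constr_apply_fintype]
    exact Submodule.sum_mem _ (fun t _ => Submodule.smul_mem _ _ (hwS t))
  · exact (Pi.basisFun A (Fin k)).ext (fun t => by
      rw [LinearMap.comp_apply, Module.Basis.constr_basis]; exact hwu t)

variable (I : Ideal A) (M : Type) [AddCommGroup M] [Module A M] [Module.Finite A M]

abbrev Tgt (n : ℕ) : Type := ↥((I ^ n • ⊤ : Submodule A M))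

/-- Artin-Rees constants for the kernels in the resolution of `I^n M`. -/
def arc (n j : ℕ) : ℕ :=
  (Ideal.exists_pow_inf_eq_pow_smul I ((stage A (Tgt I M n) j).2)).choose

lemma arc_spec (n j s : ℕ) :
    (I^s • ⊤ : Submodule A (Fin (stage A (Tgt I M n) j).1 → A)) ⊓ (stage A (Tgt I M n) j).2
      ≤ I^(s - arc I M n j) • (stage A (Tgt I M n) j).2 := by
  by_cases h : s ≥ arc I M n j
  · rw [(Ideal.exists_pow_inf_eq_pow_smul I ((stage A (Tgt I M n) j).2)).choose_spec s h]
    exact smul_mono_right _ inf_le_right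
  · have h0 : s - arc I M n j = 0 := by omega
    rw [h0, pow_zero, Ideal.one_eq_top, Submodule.top_smul]
    exact inf_le_right

/-- The decreasing sequence of powers available at each level. -/
def efn (n i j : ℕ) : ℕ :=
  ((Finset.range i).sum (arc I M n) + 1) - (Finset.range j).sum (arc I M n)

lemma efn_succ (n i j : ℕ) : efn I M n i (j+1) = efn I M n i j - arc I M n j := by
  rw [efn, efn, Finset.sum_range_succ, Nat.sub_sub]

lemma efn_i (n i : ℕ) : efn I M n i i = 1 := by
  rw [efn, Nat.add_sub_cancel_left]

/-- `c`, the total shift. -/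
def cbig (n i : ℕ) : ℕ := efn I M n i 0

lemma incl_mem (n c : ℕ) (h : (I^(n+c) • ⊤ : Submodule A M) ≤ I^n • ⊤) (y : Tgt I M (n+c)) :
    Submodule.inclusion h y ∈ (I^c • ⊤ : Submodule A (Tgt I M n)) := by
  have hmap : Submodule.map (I^n • ⊤ : Submodule A M).subtype
      (I^c • ⊤ : Submodule A (Tgt I M n)) = (I^(n+c) • ⊤ : Submodule A M) := by
    rw [Submodule.map_smul'', Submodule.map_top, Submodule.range_subtype,
      ← Submodule.smul_assoc, smul_eq_mul, ← pow_add, add_comm]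
  have hy : (y : M) ∈ Submodule.map (I^n • ⊤ : Submodule A M).subtype
      (I^c • ⊤ : Submodule A (Tgt I M n)) := by rw [hmap]; exact y.2
  obtain ⟨z, hz, hzy⟩ := Submodule.mem_map.1 hy
  have : z = Submodule.inclusion h y := Subtype.ext hzy
  exact this ▸ hz

/-- invariant for the partial lifts -/
def Inv (n i j : ℕ)
    (g : (Fin (stage A (Tgt I M (n + cbig I M n i)) j).1 → A) →ₗ[A]
         (Fin (stage A (Tgt I M n) j).1 → A)) : Prop :=
  (∀ x, g x ∈ (I ^ (efn I M n i j) • ⊤ : Submodule A (Fin (stage A (Tgt I M n) j).1 → A))) ∧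
  (∀ x, g (dm A (Tgt I M (n + cbig I M n i)) j x) ∈ (stage A (Tgt I M n) j).2)

lemma base_ex (n i : ℕ) (h : (I^(n + cbig I M n i) • ⊤ : Submodule A M) ≤ I^n • ⊤) :
    ∃ g : (Fin (stage A (Tgt I M (n + cbig I M n i)) 0).1 → A) →ₗ[A]
          (Fin (stage A (Tgt I M n) 0).1 → A),
      (∀ x, g x ∈ (I ^ (cbig I M n i) • ⊤ :
          Submodule A (Fin (stage A (Tgt I M n) 0).1 → A))) ∧
      (cmap A (Tgt I M n)) ∘ₗ g
        = (Submodule.inclusion h) ∘ₗ cmap A (Tgt I M (n + cbig I M n i)) := by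
  apply exists_lift
  intro x
  have h1 : Submodule.map (cmap A (Tgt I M n))
      (I ^ (cbig I M n i) • ⊤ : Submodule A (Fin (stage A (Tgt I M n) 0).1 → A))
      = (I ^ (cbig I M n i) • ⊤ : Submodule A (Tgt I M n)) := by
    exact (Submodule.map_smul'' _ _ _).trans (congrArg _ ((Submodule.map_top _).trans (LinearMap.range_eq_top.2 (cmap_surj A _))))
  have h2 := incl_mem I M n (cbig I M n i) h (cmap A (Tgt I M (n + cbig I M n i)) x)
  rw [← h1] at h2
  exact h2

lemma step_ex (n i : ℕ) (j s : ℕ)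
    (g : (Fin (stage A (Tgt I M (n + cbig I M n i)) j).1 → A) →ₗ[A]
         (Fin (stage A (Tgt I M n) j).1 → A))
    (hg : ∀ x, g x ∈ (I ^ s • ⊤ : Submodule A (Fin (stage A (Tgt I M n) j).1 → A)))
    (hk : ∀ x, g (dm A (Tgt I M (n + cbig I M n i)) j x) ∈ (stage A (Tgt I M n) j).2) :
    ∃ g' : (Fin (stage A (Tgt I M (n + cbig I M n i)) (j+1)).1 → A) →ₗ[A]
           (Fin (stage A (Tgt I M n) (j+1)).1 → A),
      (∀ x, g' x ∈ (I ^ (s - arc I M n j) • ⊤ :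
          Submodule A (Fin (stage A (Tgt I M n) (j+1)).1 → A))) ∧
      (dm A (Tgt I M n) j) ∘ₗ g' = g ∘ₗ dm A (Tgt I M (n + cbig I M n i)) j := by
  apply exists_lift
  intro x
  have h3 : Submodule.map (dm A (Tgt I M n) j)
      (I ^ (s - arc I M n j) • ⊤ : Submodule A (Fin (stage A (Tgt I M n) (j+1)).1 → A))
      = I ^ (s - arc I M n j) • (stage A (Tgt I M n) j).2 := by
    rw [Submodule.map_smul'', Submodule.map_top, range_dm]
  rw [h3]
  exact arc_spec I M n j s ⟨hg _, hk _⟩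

end ProZeroTor
end Part2

noncomputable section Part3
namespace ProZeroTor

variable {A : Type} [CommRing A] [IsNoetherianRing A]
variable (I : Ideal A) (M : Type) [AddCommGroup M] [Module A M] [Module.Finite A M]

/-- the partial lifts -/
def lifts (n i : ℕ) (h : (I^(n + cbig I M n i) • ⊤ : Submodule A M) ≤ I^n • ⊤) :
    (j : ℕ) →
    {g : (Fin (stage A (Tgt I M (n + cbig I M n i)) j).1 → A) →ₗ[A]
         (Fin (stage A (Tgt I M n) j).1 → A) // Inv I M n i j g} := fun j =>
  Nat.rec
    (⟨(base_ex I M n i h).choose, by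
      refine ⟨fun x => (base_ex I M n i h).choose_spec.1 x, fun x => ?_⟩
      show _ ∈ (stage A (Tgt I M n) 0).2
      rw [← ker_cmap]
      show cmap A (Tgt I M n) ((base_ex I M n i h).choose (dm A (Tgt I M (n + cbig I M n i)) 0 x)) = 0
      have h1 := LinearMap.congr_fun (base_ex I M n i h).choose_spec.2
        (dm A (Tgt I M (n + cbig I M n i)) 0 x)
      refine h1.trans ?_
      exact (congrArg (Submodule.inclusion h) (cmap_dm_apply A _ x)).trans (map_zero _)⟩ :
      {g : _ →ₗ[A] _ // Inv I M n i 0 g})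
    (fun j prev =>
      ⟨(step_ex I M n i j (efn I M n i j) prev.1 prev.2.1 prev.2.2).choose, by
        constructor
        · intro x
          rw [efn_succ]
          exact (step_ex I M n i j (efn I M n i j) prev.1 prev.2.1 prev.2.2).choose_spec.1 x
        · intro x
          show _ ∈ (stage A (Tgt I M n) (j+1)).2
          rw [← ker_dm, LinearMap.mem_ker]
          have h1 := LinearMap.congr_fun
            (step_ex I M n i j (efn I M n i j) prev.1 prev.2.1 prev.2.2).choose_spec.2
            (dm A (Tgt I M (n + cbig I M n i)) (j+1) x)
          simp only [LinearMap.comp_apply] at h1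
          refine h1.trans ?_
          exact (congrArg prev.1 (dm_dm_apply A _ j x)).trans (map_zero _)⟩) j

lemma lifts_zero_comm (n i : ℕ) (h : (I^(n + cbig I M n i) • ⊤ : Submodule A M) ≤ I^n • ⊤) :
    cmap A (Tgt I M n) ∘ₗ (lifts I M n i h 0).1
      = (Submodule.inclusion h) ∘ₗ cmap A (Tgt I M (n + cbig I M n i)) :=
  (base_ex I M n i h).choose_spec.2

lemma lifts_succ_comm (n i : ℕ) (h : (I^(n + cbig I M n i) • ⊤ : Submodule A M) ≤ I^n • ⊤)
    (j : ℕ) :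
    dm A (Tgt I M n) j ∘ₗ (lifts I M n i h (j+1)).1
      = (lifts I M n i h j).1 ∘ₗ dm A (Tgt I M (n + cbig I M n i)) j :=
  (step_ex I M n i j (efn I M n i j) (lifts I M n i h j).1 (lifts I M n i h j).2.1
    (lifts I M n i h j).2.2).choose_spec.2

/-- the chain map -/
def chainMap (n i : ℕ) (h : (I^(n + cbig I M n i) • ⊤ : Submodule A M) ≤ I^n • ⊤) :
    (resolution A (Tgt I M (n + cbig I M n i))).complex ⟶ (resolution A (Tgt I M n)).complex :=
  ChainComplex.ofHom
    (fun j => ModuleCat.ofHom (lifts I M n i h j).1)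
    (fun j => by
      show _ ≫ (resCx A (Tgt I M n)).d (j+1) j = (resCx A (Tgt I M (n + cbig I M n i))).d (j+1) j ≫ _
      rw [resCx_d, resCx_d]
      apply ModuleCat.hom_ext; apply LinearMap.ext; intro x
      exact LinearMap.congr_fun (lifts_succ_comm I M n i h j) x)

lemma chainMap_w (n i : ℕ) (h : (I^(n + cbig I M n i) • ⊤ : Submodule A M) ≤ I^n • ⊤) :
    chainMap I M n i h ≫ (resolution A (Tgt I M n)).π
      = (resolution A (Tgt I M (n + cbig I M n i))).π ≫
        (ChainComplex.single₀ (ModuleCat A)).map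
          (ModuleCat.ofHom (Submodule.inclusion h)) := by
  refine HomologicalComplex.hom_ext _ _ (fun j => ?_)
  cases j with
  | zero =>
    rw [HomologicalComplex.comp_f, HomologicalComplex.comp_f]
    have e1 : (resolution A (Tgt I M n)).π.f 0 = ModuleCat.ofHom (cmap A (Tgt I M n)) :=
      resπ_f_zero A _
    have e2 : (resolution A (Tgt I M (n + cbig I M n i))).π.f 0
        = ModuleCat.ofHom (cmap A (Tgt I M (n + cbig I M n i))) := resπ_f_zero A _
    rw [e1, e2, ChainComplex.single₀_map_f_zero]
    apply ModuleCat.hom_ext; apply LinearMap.ext; intro x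
    have e3 : (chainMap I M n i h).f 0 = ModuleCat.ofHom (lifts I M n i h 0).1 := rfl
    rw [e3]
    exact LinearMap.congr_fun (lifts_zero_comm I M n i h) x
  | succ j =>
    apply (HomologicalComplex.isZero_single_obj_X (ComplexShape.down ℕ) 0 _ (j+1)
      (by simp)).eq_of_tgt

end ProZeroTor
end Part3


open ProZeroTor in
/-- Let `A` be a commutative Noetherian ring, `I ⊆ A` an ideal and `M` a finitely
generated `A`-module.  Then for every `i ≥ 0` and every `n ≥ 0` there exists `m ≥ n`
such that the homomorphism `Tor_i^A(A/I, I^m M) → Tor_i^A(A/I, I^n M)` induced by the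
inclusion `I^m M ⊆ I^n M` is the zero map; i.e. the pro-abelian group
`{Tor_i^A(A/I, I^k M)}_k` is pro-isomorphic to zero. -/
theorem tor_pow_smul_pro_zero (A : Type) [CommRing A] [IsNoetherianRing A] (I : Ideal A)
    (M : Type) [AddCommGroup M] [Module A M] [Module.Finite A M] (i n : ℕ) :
    ∃ m : ℕ, ∃ hm : n ≤ m,
      ((Tor (ModuleCat A) i).obj (ModuleCat.of A (A ⧸ I))).map
          (ModuleCat.ofHom (Submodule.inclusion
            (show (I ^ m • ⊤ : Submodule A M) ≤ (I ^ n • ⊤ : Submodule A M) from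
              Submodule.smul_mono_left (Ideal.pow_le_pow_right hm)))) = 0 := by
  classical
  refine ⟨n + cbig I M n i, Nat.le_add_right n (cbig I M n i), ?_⟩
  set h : (I ^ (n + cbig I M n i) • ⊤ : Submodule A M) ≤ (I ^ n • ⊤ : Submodule A M) :=
    Submodule.smul_mono_left (Ideal.pow_le_pow_right (Nat.le_add_right n (cbig I M n i))) with hh
  show (Functor.leftDerived ((MonoidalCategory.tensoringLeft (ModuleCat A)).obj
      (ModuleCat.of A (A ⧸ I))) i).map (ModuleCat.ofHom (Submodule.inclusion h)) = 0
  rw [Functor.leftDerived_map_eq _ i (ModuleCat.ofHom (Submodule.inclusion h))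
    (chainMap I M n i h) (chainMap_w I M n i h)]
  have hmid : (((MonoidalCategory.tensoringLeft (ModuleCat A)).obj
        (ModuleCat.of A (A ⧸ I))).mapHomologicalComplex (ComplexShape.down ℕ) ⋙
        HomologicalComplex.homologyFunctor (ModuleCat A) (ComplexShape.down ℕ) i).map
        (chainMap I M n i h) = 0 := by
    show HomologicalComplex.homologyMap
      ((((MonoidalCategory.tensoringLeft (ModuleCat A)).obj
        (ModuleCat.of A (A ⧸ I))).mapHomologicalComplex (ComplexShape.down ℕ)).map
        (chainMap I M n i h)) i = 0
    apply homologyMap_zero_of_f_zero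
    show ((MonoidalCategory.tensoringLeft (ModuleCat A)).obj (ModuleCat.of A (A ⧸ I))).map
      ((chainMap I M n i h).f i) = 0
    have e : (chainMap I M n i h).f i = ModuleCat.ofHom (lifts I M n i h i).1 := rfl
    rw [e]
    apply whisker_zero
    intro x
    have hx := (lifts I M n i h i).2.1 x
    rwa [efn_i, pow_one] at hx
  rw [hmid, Limits.zero_comp, Limits.comp_zero]
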